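/- Let p, q : ℝ^d → (0,∞) be twice continuously differentiable, with q a probability density (∫ q = 1). Assume the functions q·‖∇ log p‖₂², q·‖∇ log q‖₂², q·|Δ log p| and q·|Δ log q| are Lebesgue integrable, and that ∫_{ℝ^d} div( q(z)·∇ log p(z) ) dz = 0 and ∫_{ℝ^d} Δq(z) dz = 0. Then ∫_{ℝ^d} q(z)·‖∇ log p(z) − ∇ log q(z)‖₂² dz = ∫_{ℝ^d} q(z)·( 2·Δ log p(z) − Δ log q(z) + ‖∇ log p(z)‖₂² ) dz. (This is the score-matching reformulation of the Fisher divergence used in the paper's out-of-distribution generalization bound.) -/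

import Mathlib

open MeasureTheory

/-- Divergence of a vector field `F : ℝ^d → ℝ^d`: `div F x = Σ_a ∂_a F_a (x)`. -/
noncomputable def diverg {d : ℕ}
    (F : EuclideanSpace ℝ (Fin d) → EuclideanSpace ℝ (Fin d))
    (x : EuclideanSpace ℝ (Fin d)) : ℝ :=
  ∑ a, fderiv ℝ (fun y => F y a) x (EuclideanSpace.single a 1)

/-- Laplacian of a scalar function `u : ℝ^d → ℝ`: `Δu x = Σ_a ∂_a ∂_a u (x)`. -/
noncomputable def lap {d : ℕ} (u : EuclideanSpace ℝ (Fin d) → ℝ)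
    (x : EuclideanSpace ℝ (Fin d)) : ℝ :=
  ∑ a, fderiv ℝ (fun y => fderiv ℝ u y (EuclideanSpace.single a 1)) x
    (EuclideanSpace.single a 1)

section helpers

variable {d : ℕ}

local notation "E" => EuclideanSpace ℝ (Fin d)

theorem inner_grad (f : E → ℝ) (x y : E) :
    (inner ℝ (gradient f x) y : ℝ) = fderiv ℝ f x y := by
  rw [gradient, InnerProductSpace.toDual_symm_apply]

theorem grad_apply (f : E → ℝ) (x : E) (a : Fin d) :
    gradient f x a = fderiv ℝ f x (EuclideanSpace.single a 1) := by
  rw [← inner_grad, real_inner_comm, EuclideanSpace.inner_single_left]; simp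

theorem grad_log (f : E → ℝ) (hf : ContDiff ℝ 2 f) (hfpos : ∀ z, 0 < f z) (z : E) :
    gradient f z = f z • gradient (fun w => Real.log (f w)) z := by
  have hd : DifferentiableAt ℝ f z := hf.differentiable (by norm_num) z
  have h1 : HasFDerivAt (fun w => Real.log (f w)) ((f z)⁻¹ • fderiv ℝ f z) z :=
    hd.hasFDerivAt.log (ne_of_gt (hfpos z))
  rw [gradient, gradient, h1.fderiv, LinearIsometryEquiv.map_smul, smul_smul,
    mul_inv_cancel₀ (ne_of_gt (hfpos z)), one_smul]

theorem cd_log (f : E → ℝ) (hf : ContDiff ℝ 2 f) (hfpos : ∀ z, 0 < f z) :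
    ContDiff ℝ 2 (fun w => Real.log (f w)) :=
  hf.log fun z => ne_of_gt (hfpos z)

theorem cd_snd (u : E → ℝ) (hu : ContDiff ℝ 2 u) (a : Fin d) :
    ContDiff ℝ 1 (fun y => fderiv ℝ u y (EuclideanSpace.single a 1)) :=
  (hu.fderiv_right (m := 1) (by norm_num)).clm_apply contDiff_const

theorem continuous_lap (u : E → ℝ) (hu : ContDiff ℝ 2 u) : Continuous (lap u) := by
  unfold lap
  apply continuous_finset_sum
  intro a _
  exact ((((cd_snd u hu a).fderiv_right (m := 0) (by norm_num)).clm_apply contDiff_const).continuous)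

theorem continuous_grad (u : E → ℝ) (hu : ContDiff ℝ 2 u) :
    Continuous (fun z => gradient u z) := by
  have : Continuous (fderiv ℝ u) := hu.continuous_fderiv (by norm_num)
  exact (InnerProductSpace.toDual ℝ E).symm.continuous.comp this

theorem diverg_smul_grad (q u : E → ℝ) (hq : ContDiff ℝ 2 q) (hu : ContDiff ℝ 2 u) (z : E) :
    diverg (fun y => q y • gradient u y) z
      = inner ℝ (gradient q z) (gradient u z) + q z * lap u z := by
  have hqd : DifferentiableAt ℝ q z := hq.differentiable (by norm_num) z
  unfold diverg lap
  have hcomp : ∀ a : Fin d, (fun y => (q y • gradient u y) a)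
      = fun y => q y * fderiv ℝ u y (EuclideanSpace.single a 1) := by
    intro a; funext y
    show q y * gradient u y a = _
    rw [grad_apply]
  have hterm : ∀ a : Fin d,
      fderiv ℝ (fun y => (q y • gradient u y) a) z (EuclideanSpace.single a 1)
        = fderiv ℝ q z (EuclideanSpace.single a 1) * fderiv ℝ u z (EuclideanSpace.single a 1)
          + q z * fderiv ℝ (fun y => fderiv ℝ u y (EuclideanSpace.single a 1)) z
              (EuclideanSpace.single a 1) := by
    intro a
    rw [hcomp a, fderiv_fun_mul hqd ((cd_snd u hu a).differentiable one_ne_zero z)]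
    simp only [ContinuousLinearMap.add_apply, ContinuousLinearMap.smul_apply, smul_eq_mul]
    ring
  rw [Finset.sum_congr rfl fun a _ => hterm a, Finset.sum_add_distrib, ← Finset.mul_sum]
  congr 1
  rw [PiLp.inner_apply]
  simp [grad_apply, mul_comm]

end helpers

section helpers2
variable {d : ℕ}
local notation "E" => EuclideanSpace ℝ (Fin d)

theorem lap_eq_diverg_grad (q : E → ℝ) (z : E) :
    lap q z = diverg (fun y => gradient q y) z := by
  unfold lap diverg
  refine Finset.sum_congr rfl fun a _ => ?_
  have h : (fun y : E => gradient q y a)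
      = fun y => fderiv ℝ q y (EuclideanSpace.single a 1) :=
    funext fun y => grad_apply q y a
  rw [h]

theorem lap_decomp (q : E → ℝ) (hq : ContDiff ℝ 2 q) (hqpos : ∀ z, 0 < q z) (z : E) :
    lap q z = q z * ‖gradient (fun w => Real.log (q w)) z‖ ^ 2
      + q z * lap (fun w => Real.log (q w)) z := by
  have h1 : (fun y => gradient q y)
      = fun y => q y • gradient (fun w => Real.log (q w)) y :=
    funext fun y => grad_log q hq hqpos y
  rw [lap_eq_diverg_grad, h1, diverg_smul_grad q _ hq (cd_log q hq hqpos) z,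
    grad_log q hq hqpos z, real_inner_smul_left, real_inner_self_eq_norm_sq]

end helpers2

theorem score_matching_identity
    {d : ℕ} (p q : EuclideanSpace ℝ (Fin d) → ℝ)
    (hp : ContDiff ℝ 2 p) (hq : ContDiff ℝ 2 q)
    (hppos : ∀ z, 0 < p z) (hqpos : ∀ z, 0 < q z)
    (hqdens : (∫ z, q z) = 1)
    (hint1 : Integrable (fun z =>
      q z * ‖gradient (fun w => Real.log (p w)) z‖ ^ 2))
    (hint2 : Integrable (fun z =>
      q z * ‖gradient (fun w => Real.log (q w)) z‖ ^ 2))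
    (hint3 : Integrable (fun z => q z * |lap (fun w => Real.log (p w)) z|))
    (hint4 : Integrable (fun z => q z * |lap (fun w => Real.log (q w)) z|))
    (hdiv : (∫ z, diverg (fun y => q y • gradient (fun w => Real.log (p w)) y) z) = 0)
    (hlapq : (∫ z, lap q z) = 0) :
    (∫ z, q z * ‖gradient (fun w => Real.log (p w)) z -
        gradient (fun w => Real.log (q w)) z‖ ^ 2) =
      ∫ z, q z * (2 * lap (fun w => Real.log (p w)) z -
        lap (fun w => Real.log (q w)) z +
        ‖gradient (fun w => Real.log (p w)) z‖ ^ 2) := by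
  set P := fun w => Real.log (p w) with hP
  set Q := fun w => Real.log (q w) with hQ
  have hPc : ContDiff ℝ 2 P := cd_log p hp hppos
  have hQc : ContDiff ℝ 2 Q := cd_log q hq hqpos
  have hqcont : Continuous q := hq.continuous
  have cGp : Continuous (fun z => gradient P z) := continuous_grad P hPc
  have cGq : Continuous (fun z => gradient Q z) := continuous_grad Q hQc
  have cLp : Continuous (lap P) := continuous_lap P hPc
  have cLq : Continuous (lap Q) := continuous_lap Q hQc
  -- integrability of q * lap P and q * lap Q
  have iLp : Integrable (fun z => q z * lap P z) := by
    refine hint3.mono' ((hqcont.mul cLp).aestronglyMeasurable) (ae_of_all _ fun z => ?_)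
    rw [Real.norm_eq_abs, abs_mul, abs_of_nonneg (hqpos z).le]
  have iLq : Integrable (fun z => q z * lap Q z) := by
    refine hint4.mono' ((hqcont.mul cLq).aestronglyMeasurable) (ae_of_all _ fun z => ?_)
    rw [Real.norm_eq_abs, abs_mul, abs_of_nonneg (hqpos z).le]
  -- integrability of the cross term
  have iC : Integrable (fun z => q z * (inner ℝ (gradient P z) (gradient Q z) : ℝ)) := by
    have hg : Integrable (fun z =>
        (q z * ‖gradient P z‖ ^ 2 + q z * ‖gradient Q z‖ ^ 2) / 2) :=
      (hint1.add hint2).div_const 2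
    refine hg.mono' ((hqcont.mul (cGp.inner cGq)).aestronglyMeasurable)
      (ae_of_all _ fun z => ?_)
    rw [Real.norm_eq_abs, abs_mul, abs_of_nonneg (hqpos z).le]
    have h1 : |(inner ℝ (gradient P z) (gradient Q z) : ℝ)|
        ≤ ‖gradient P z‖ * ‖gradient Q z‖ := abs_real_inner_le_norm _ _
    nlinarith [sq_nonneg (‖gradient P z‖ - ‖gradient Q z‖), (hqpos z).le,
      abs_nonneg (inner ℝ (gradient P z) (gradient Q z) : ℝ)]
  -- divergence identity
  have hdiv' : (∫ z, (q z * (inner ℝ (gradient P z) (gradient Q z) : ℝ)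
      + q z * lap P z)) = 0 := by
    calc (∫ z, (q z * (inner ℝ (gradient P z) (gradient Q z) : ℝ) + q z * lap P z))
        = ∫ z, diverg (fun y => q y • gradient P y) z := by
          refine integral_congr_ae (ae_of_all _ fun z => ?_)
          rw [diverg_smul_grad q P hq hPc z, grad_log q hq hqpos z,
            real_inner_smul_left, real_inner_comm]
      _ = 0 := hdiv
  have hC : (∫ z, q z * (inner ℝ (gradient P z) (gradient Q z) : ℝ))
      = - ∫ z, q z * lap P z := by
    have hs := integral_add iC iLp
    rw [hdiv'] at hs
    linarith
  -- laplacian identity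
  have hlapq' : (∫ z, (q z * ‖gradient Q z‖ ^ 2 + q z * lap Q z)) = 0 := by
    calc (∫ z, (q z * ‖gradient Q z‖ ^ 2 + q z * lap Q z))
        = ∫ z, lap q z := by
          refine integral_congr_ae (ae_of_all _ fun z => ?_)
          exact (lap_decomp q hq hqpos z).symm
      _ = 0 := hlapq
  have hB : (∫ z, q z * ‖gradient Q z‖ ^ 2) = - ∫ z, q z * lap Q z := by
    have hs := integral_add hint2 iLq
    rw [hlapq'] at hs
    linarith
  -- expand left-hand side
  have hLHS : (∫ z, q z * ‖gradient P z - gradient Q z‖ ^ 2)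
      = ∫ z, ((q z * ‖gradient P z‖ ^ 2
          - 2 * (q z * (inner ℝ (gradient P z) (gradient Q z) : ℝ)))
          + q z * ‖gradient Q z‖ ^ 2) := by
    refine integral_congr_ae (ae_of_all _ fun z => ?_)
    dsimp only
    rw [norm_sub_sq_real]; ring
  have hRHS : (∫ z, q z * (2 * lap P z - lap Q z + ‖gradient P z‖ ^ 2))
      = ∫ z, ((2 * (q z * lap P z) - q z * lap Q z) + q z * ‖gradient P z‖ ^ 2) := by
    refine integral_congr_ae (ae_of_all _ fun z => ?_)
    dsimp only
    ring
  have i1 : Integrable (fun z => q z * ‖gradient P z‖ ^ 2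
      - 2 * (q z * (inner ℝ (gradient P z) (gradient Q z) : ℝ))) :=
    hint1.sub (iC.const_mul 2)
  have i2 : Integrable (fun z => 2 * (q z * (inner ℝ (gradient P z) (gradient Q z) : ℝ))) :=
    iC.const_mul 2
  have i3 : Integrable (fun z => 2 * (q z * lap P z)) := iLp.const_mul 2
  have i4 : Integrable (fun z => 2 * (q z * lap P z) - q z * lap Q z) := i3.sub iLq
  have e1 : (∫ z, ((q z * ‖gradient P z‖ ^ 2
        - 2 * (q z * (inner ℝ (gradient P z) (gradient Q z) : ℝ)))
        + q z * ‖gradient Q z‖ ^ 2))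
      = (∫ z, (q z * ‖gradient P z‖ ^ 2
        - 2 * (q z * (inner ℝ (gradient P z) (gradient Q z) : ℝ))))
        + ∫ z, q z * ‖gradient Q z‖ ^ 2 := integral_add i1 hint2
  have e2 : (∫ z, (q z * ‖gradient P z‖ ^ 2
        - 2 * (q z * (inner ℝ (gradient P z) (gradient Q z) : ℝ))))
      = (∫ z, q z * ‖gradient P z‖ ^ 2)
        - ∫ z, 2 * (q z * (inner ℝ (gradient P z) (gradient Q z) : ℝ)) :=
    integral_sub hint1 i2
  have e3 : (∫ z, 2 * (q z * (inner ℝ (gradient P z) (gradient Q z) : ℝ)))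
      = 2 * ∫ z, q z * (inner ℝ (gradient P z) (gradient Q z) : ℝ) :=
    integral_const_mul 2 _
  have e4 : (∫ z, ((2 * (q z * lap P z) - q z * lap Q z) + q z * ‖gradient P z‖ ^ 2))
      = (∫ z, (2 * (q z * lap P z) - q z * lap Q z)) + ∫ z, q z * ‖gradient P z‖ ^ 2 :=
    integral_add i4 hint1
  have e5 : (∫ z, (2 * (q z * lap P z) - q z * lap Q z))
      = (∫ z, 2 * (q z * lap P z)) - ∫ z, q z * lap Q z := integral_sub i3 iLq
  have e6 : (∫ z, 2 * (q z * lap P z)) = 2 * ∫ z, q z * lap P z :=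
    integral_const_mul 2 _
  rw [hLHS, hRHS, e1, e2, e3, e4, e5, e6]
  linarith
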